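/- Suppose Φ is holomorphic in a neighborhood of 0 in ℂ with Φ(0) = 0, Φ'(0) = 1, and Φ(P(z)) = Φ(z)/4 for all z near 0, and write its Taylor series as Φ(z) = Σ_{i≥1} φ_i z^i. Then φ_1 = 1 and for every i ≥ 1, φ_{i+1} = (4/(1 - 4^{-i})) · Σ_{k=0}^{i-1} 4^{k-i} · C(2(i-k), k+1) · φ_{i-k}, where C(a,b) denotes the binomial coefficient, understood to be 0 when b > a. -/

import Mathlib

open Filter

/-- The cubic polynomial `P(z) = (z + 2z² + z³)/4`. -/
noncomputable def P : ℂ → ℂ := fun z => (z + 2 * z ^ 2 + z ^ 3) / 4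

open Polynomial Asymptotics Finset in
lemma poly_isBigO_coeff_zero :
    ∀ (n : ℕ) (R : ℂ[X]),
      (fun z => R.eval z) =O[nhdsWithin (0:ℂ) {(0:ℂ)}ᶜ] (fun z => z ^ n) →
      ∀ j < n, R.coeff j = 0 := by
  intro n
  induction n with
  | zero => intro R _ j hj; omega
  | succ n ih =>
    intro R h j hj
    have h0 : R.coeff 0 = 0 := by
      have ht : Tendsto (fun z => R.eval z) (nhdsWithin (0:ℂ) {(0:ℂ)}ᶜ) (nhds (R.eval 0)) :=
        (R.continuous.tendsto 0).mono_left nhdsWithin_le_nhds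
      have hz : Tendsto (fun z : ℂ => z ^ (n+1)) (nhdsWithin (0:ℂ) {(0:ℂ)}ᶜ) (nhds 0) := by
        have := ((continuous_pow (n+1)).tendsto (0:ℂ)).mono_left
          (nhdsWithin_le_nhds (s := {(0:ℂ)}ᶜ))
        simpa using this
      have := tendsto_nhds_unique ht (h.trans_tendsto hz)
      rw [R.coeff_zero_eq_eval_zero, this]
    cases j with
    | zero => exact h0
    | succ j =>
      have hX : ∀ z : ℂ, R.eval z = z * (R.divX).eval z := by
        intro z
        conv_lhs => rw [← R.X_mul_divX_add]
        simp [h0]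
      obtain ⟨C, hC⟩ := isBigO_iff.mp h
      have h' : (fun z => (R.divX).eval z) =O[nhdsWithin (0:ℂ) {(0:ℂ)}ᶜ] fun z => z ^ n := by
        rw [isBigO_iff]
        refine ⟨C, ?_⟩
        filter_upwards [hC, self_mem_nhdsWithin] with z hz hz0
        have hz0' : z ≠ 0 := hz0
        have hzpos : (0:ℝ) < ‖z‖ := by simpa using hz0'
        rw [hX z, norm_mul, norm_pow] at hz
        rw [norm_pow, ← mul_le_mul_iff_of_pos_right hzpos]
        calc ‖(R.divX).eval z‖ * ‖z‖ = ‖z‖ * ‖(R.divX).eval z‖ := by ring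
          _ ≤ C * ‖z‖ ^ (n+1) := hz
          _ = C * ‖z‖ ^ n * ‖z‖ := by ring
      have := ih R.divX h' j (by omega)
      rwa [Polynomial.coeff_divX] at this

/-- if `Φ` is holomorphic near `0` with power series `Φ(z) = Σ φ_i z^i`,
`Φ(0) = 0`, `Φ'(0) = 1`, and `Φ(P(z)) = Φ(z)/4` near `0`, then `φ₁ = 1` and for `i ≥ 1`,
`φ_{i+1} = (4/(1-4^{-i})) Σ_{k=0}^{i-1} 4^{k-i} C(2(i-k), k+1) φ_{i-k}`. -/
theorem stmt3 (Φ : ℂ → ℂ) (p : FormalMultilinearSeries ℂ ℂ ℂ)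
    (hp : HasFPowerSeriesAt Φ p 0)
    (h0 : Φ 0 = 0) (h1 : deriv Φ 0 = 1)
    (hfe : ∀ᶠ z in nhds (0 : ℂ), Φ (P z) = Φ z / 4) :
    p.coeff 1 = 1 ∧
    ∀ i : ℕ, 1 ≤ i →
      p.coeff (i + 1) =
        (4 / (1 - (4 : ℂ) ^ (-(i : ℤ)))) *
          ∑ k ∈ Finset.range i,
            (4 : ℂ) ^ ((k : ℤ) - (i : ℤ)) * ((2 * (i - k)).choose (k + 1) : ℂ) *
              p.coeff (i - k) := by
  classical
  constructor
  · have hd := hp.deriv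
    rw [h1] at hd
    exact hd.symm
  intro i hi
  set n := i + 1 with hn
  open Polynomial Asymptotics Finset in
  -- the truncated Taylor polynomial as a function
  have hS : ∀ y : ℂ, p.partialSum (n+1) y = ∑ j ∈ Finset.range (n+1), p.coeff j * y ^ j := by
    intro y
    simp [FormalMultilinearSeries.partialSum,
      FormalMultilinearSeries.apply_eq_pow_smul_coeff, smul_eq_mul, mul_comm]
  set S : ℂ → ℂ := fun y => ∑ j ∈ Finset.range (n+1), p.coeff j * y ^ j with hSdef
  have hPcont : Continuous P := by unfold P; continuity
  have hPt : Filter.Tendsto P (nhds 0) (nhds 0) := by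
    have := hPcont.tendsto 0
    simpa [P] using this
  have hPO : P =O[nhds (0:ℂ)] (fun z => z) := by
    rw [Asymptotics.isBigO_iff]
    refine ⟨1, ?_⟩
    filter_upwards [Metric.ball_mem_nhds (0:ℂ) one_pos] with z hz
    rw [mem_ball_zero_iff] at hz
    have hPz : P z = z * (1 + z)^2 / 4 := by unfold P; ring
    rw [hPz]
    have h1z : ‖1 + z‖ ≤ 1 + ‖z‖ := by simpa using norm_add_le 1 z
    have h4 : ‖(4:ℂ)‖ = 4 := by norm_num
    rw [norm_div, norm_mul, norm_pow, h4]
    have hb : ‖1 + z‖ ^ 2 ≤ 4 := by nlinarith [h1z, hz, norm_nonneg (1+z), norm_nonneg z]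
    nlinarith [mul_le_mul_of_nonneg_left hb (norm_nonneg z), norm_nonneg z]
  have hO1 : (fun y => Φ y - S y) =O[nhds (0:ℂ)] fun y => y ^ (n+1) := by
    have h := hp.isBigO_sub_partialSum_pow (n+1)
    simp only [zero_add] at h
    have hfun : (fun y : ℂ => Φ y - p.partialSum (n+1) y) = fun y => Φ y - S y := by
      funext y; rw [hS]
    rw [hfun] at h
    have h2 : (fun y : ℂ => ‖y‖ ^ (n+1)) =O[nhds (0:ℂ)] fun y => y ^ (n+1) := by
      apply Asymptotics.IsBigO.of_bound 1
      filter_upwards with y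
      simp
    exact h.trans h2
  have hO2 : (fun z => Φ (P z) - S (P z)) =O[nhds (0:ℂ)] fun z => z ^ (n+1) := by
    have hc := hO1.comp_tendsto hPt
    simp only [Function.comp_def] at hc
    exact hc.trans (hPO.pow (n+1))
  -- the polynomial version of P
  set Pq : Polynomial ℂ := Polynomial.C (4:ℂ)⁻¹ * (Polynomial.X * (1 + Polynomial.X)^2)
    with hPqdef
  have hPqeval : ∀ z, Pq.eval z = P z := by
    intro z
    simp only [hPqdef, Polynomial.eval_mul, Polynomial.eval_C, Polynomial.eval_X,
      Polynomial.eval_pow, Polynomial.eval_add, Polynomial.eval_one]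
    unfold P; ring
  set Q : Polynomial ℂ :=
      (∑ j ∈ Finset.range (n+1), Polynomial.C (p.coeff j) * Pq ^ j)
        - Polynomial.C (4:ℂ)⁻¹ *
          ∑ j ∈ Finset.range (n+1), Polynomial.C (p.coeff j) * Polynomial.X ^ j with hQdef
  have hQeval : ∀ z, Q.eval z = S (P z) - (4:ℂ)⁻¹ * S z := by
    intro z
    simp [hQdef, hSdef, Polynomial.eval_finset_sum, hPqeval]
  have hQO : (fun z => Q.eval z) =O[nhds (0:ℂ)] fun z => z ^ (n+1) := by
    have hmid : (fun z => Φ (P z) - Φ z / 4) =O[nhds (0:ℂ)] fun z => z ^ (n+1) := by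
      apply Asymptotics.IsBigO.of_bound 0
      filter_upwards [hfe] with z hz
      simp [hz]
    have hsum := (hO2.neg_left.add hmid).add (hO1.const_mul_left (4:ℂ)⁻¹)
    apply hsum.congr_left
    intro z
    rw [hQeval z]
    field_simp
    ring
  have hcoeff : ∀ j < n + 1, Q.coeff j = 0 :=
    poly_isBigO_coeff_zero (n+1) Q (hQO.mono nhdsWithin_le_nhds)
  -- compute the n-th coefficient of Q
  have hPqpow : ∀ j, Pq ^ j =
      Polynomial.C ((4:ℂ)⁻¹ ^ j) * ((1 + Polynomial.X)^(2*j) * Polynomial.X ^ j) := by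
    intro j
    rw [hPqdef, mul_pow, ← map_pow, pow_mul, mul_pow, mul_comm (Polynomial.X ^ j)]
  have hcoeffPq : ∀ j ∈ Finset.range (n+1),
      (Polynomial.C (p.coeff j) * Pq ^ j).coeff n
        = p.coeff j * ((4:ℂ)⁻¹ ^ j * ((2*j).choose (n-j) : ℂ)) := by
    intro j hj
    rw [Finset.mem_range] at hj
    rw [hPqpow, Polynomial.coeff_C_mul, Polynomial.coeff_C_mul,
      Polynomial.coeff_mul_X_pow', if_pos (by omega : j ≤ n),
      Polynomial.coeff_one_add_X_pow]
  have h2sum : (∑ j ∈ Finset.range (n+1),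
      Polynomial.C (p.coeff j) * Polynomial.X ^ j).coeff n = p.coeff n := by
    rw [Polynomial.finset_sum_coeff]
    simp only [Polynomial.coeff_C_mul, Polynomial.coeff_X_pow]
    rw [Finset.sum_eq_single n]
    · simp
    · intro b _ hbn; simp [Ne.symm hbn]
    · intro hmem; exact absurd (Finset.self_mem_range_succ n) hmem
  have key : (∑ j ∈ Finset.range (n+1),
      p.coeff j * ((4:ℂ)⁻¹ ^ j * ((2*j).choose (n-j) : ℂ))) = (4:ℂ)⁻¹ * p.coeff n := by
    have hq := hcoeff n (by omega)
    rw [hQdef, Polynomial.coeff_sub, Polynomial.finset_sum_coeff,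
      Finset.sum_congr rfl hcoeffPq, Polynomial.coeff_C_mul, h2sum, sub_eq_zero] at hq
    exact hq
  -- split off the top term
  have hA : (∑ j ∈ Finset.range n,
      p.coeff j * ((4:ℂ)⁻¹ ^ j * ((2*j).choose (n-j) : ℂ)))
        = (4:ℂ)⁻¹ * p.coeff n - p.coeff n * (4:ℂ)⁻¹ ^ n := by
    rw [Finset.sum_range_succ] at key
    have hterm : p.coeff n * ((4:ℂ)⁻¹ ^ n * ((2*n).choose (n-n) : ℂ))
        = p.coeff n * (4:ℂ)⁻¹ ^ n := by
      simp [Nat.sub_self]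
    rw [hterm] at key
    linear_combination key
  -- reindex the target sum
  have hT : (∑ k ∈ Finset.range i,
        (4 : ℂ) ^ ((k : ℤ) - (i : ℤ)) * ((2 * (i - k)).choose (k + 1) : ℂ) * p.coeff (i - k))
      = ∑ j ∈ Finset.range n,
          p.coeff j * ((4:ℂ)⁻¹ ^ j * ((2*j).choose (n-j) : ℂ)) := by
    have step1 : ∀ k ∈ Finset.range i,
        (4 : ℂ) ^ ((k : ℤ) - (i : ℤ)) * ((2 * (i - k)).choose (k + 1) : ℂ) * p.coeff (i - k)
          = p.coeff (i-k) * ((4:ℂ)⁻¹ ^ (i-k) * ((2*(i-k)).choose (n-(i-k)) : ℂ)) := by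
      intro k hk
      rw [Finset.mem_range] at hk
      have e1 : n - (i - k) = k + 1 := by omega
      have e2 : (k:ℤ) - (i:ℤ) = -(((i - k : ℕ)) : ℤ) := by
        rw [Nat.cast_sub hk.le]; ring
      rw [e1, e2, zpow_neg, zpow_natCast, ← inv_pow]
      ring
    rw [Finset.sum_congr rfl step1]
    have step2 : ∀ k ∈ Finset.range i,
        p.coeff (i-k) * ((4:ℂ)⁻¹ ^ (i-k) * ((2*(i-k)).choose (n-(i-k)) : ℂ))
          = (fun j => p.coeff j * ((4:ℂ)⁻¹ ^ j * ((2*j).choose (n-j) : ℂ))) ((i - 1 - k) + 1) := by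
      intro k hk
      rw [Finset.mem_range] at hk
      have : i - 1 - k + 1 = i - k := by omega
      rw [this]
    rw [Finset.sum_congr rfl step2,
      Finset.sum_range_reflect (fun k => (fun j => p.coeff j * ((4:ℂ)⁻¹ ^ j * ((2*j).choose (n-j) : ℂ))) (k+1)) i]
    have : ∑ j ∈ Finset.range n, p.coeff j * ((4:ℂ)⁻¹ ^ j * ((2*j).choose (n-j) : ℂ))
        = (∑ k ∈ Finset.range i,
            p.coeff (k+1) * ((4:ℂ)⁻¹ ^ (k+1) * ((2*(k+1)).choose (n-(k+1)) : ℂ)))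
          + p.coeff 0 * ((4:ℂ)⁻¹ ^ 0 * ((2*0).choose (n-0) : ℂ)) := by
      rw [hn, Finset.sum_range_succ']
    rw [this]
    have hz : p.coeff 0 * ((4:ℂ)⁻¹ ^ 0 * ((2*0).choose (n-0) : ℂ)) = 0 := by
      have : (0:ℕ).choose (n - 0) = 0 := Nat.choose_eq_zero_of_lt (by omega)
      simp [this]
      exact Or.inr (Nat.choose_eq_zero_of_lt (by omega))
    rw [hz, add_zero]
  -- nonvanishing of the denominator
  have h4c : (4:ℂ) ^ (-(i:ℤ)) = ((4:ℂ)⁻¹) ^ i := by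
    rw [zpow_neg, zpow_natCast, inv_pow]
  have hne : (1:ℂ) - (4:ℂ) ^ (-(i:ℤ)) ≠ 0 := by
    rw [h4c]
    intro hcontra
    rw [sub_eq_zero] at hcontra
    have hr : ((4:ℂ)⁻¹) ^ i = ((((4:ℝ)⁻¹) ^ i : ℝ) : ℂ) := by push_cast; ring
    rw [hr] at hcontra
    have : ((4:ℝ)⁻¹) ^ i = 1 := by
      have := hcontra.symm
      exact_mod_cast this
    have hlt : ((4:ℝ)⁻¹) ^ i < 1 := by
      apply pow_lt_one₀ (by norm_num) (by norm_num) (by omega)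
    linarith
  rw [hT, hA, div_mul_eq_mul_div, eq_div_iff hne, h4c]
  have hnp : (4:ℂ)⁻¹ ^ n = (4:ℂ)⁻¹ ^ i * (4:ℂ)⁻¹ := by rw [hn, pow_succ]
  rw [hnp]
  have : p.coeff n = p.coeff (i+1) := by rw [hn]
  rw [← this]
  field_simp
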